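/- For i = 1, 2, let C_i be a linear code of length n over F_q with dimension k_i, generator matrix G_i, and parity check matrix H_i. Let Q be the linear code of length k_2 over F_q generated by the rows of H_1·G_2^T, and let P be a parity check matrix of Q. Then P·G_2 is a generator matrix of the intersection C_1 ∩ C_2 (i.e., the rows of P·G_2 form a basis of C_1 ∩ C_2). -/

import Mathlib

open Matrix

/-- Euclidean dual of a linear code of length `n`. -/
def dualCode {F : Type*} [Field F] {n : ℕ} (CC : Submodule F (Fin n → F)) :
    Submodule F (Fin n → F) where
  carrier := {v | ∀ c ∈ CC, ∑ i, c i * v i = 0}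
  zero_mem' := by intro c hc; simp
  add_mem' := by
    intro a b ha hb c hc
    simp only [Set.mem_setOf_eq] at *
    simp only [Pi.add_apply, mul_add, Finset.sum_add_distrib, ha c hc, hb c hc, add_zero]
  smul_mem' := by
    intro r v hv c hc
    simp only [Set.mem_setOf_eq] at *
    have h1 : ∀ i, c i * (r • v) i = r * (c i * v i) := by
      intro i; simp only [Pi.smul_apply, smul_eq_mul]; ring
    simp only [h1, ← Finset.mul_sum, hv c hc, mul_zero]

/-- `G` is a generator matrix of the code `CC`: its rows form a basis of `CC`. -/
def IsGenMat (F : Type*) [Field F] {k n : ℕ} (CC : Submodule F (Fin n → F))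
    (G : Matrix (Fin k) (Fin n) F) : Prop :=
  LinearIndependent F (fun i => G i) ∧ Submodule.span F (Set.range (fun i => G i)) = CC

section aux
variable {F : Type*} [Field F] {k n : ℕ}

/-- dot-with-`v` as a linear map. -/
noncomputable def dotL (v : Fin n → F) : (Fin n → F) →ₗ[F] F where
  toFun c := c ⬝ᵥ v
  map_add' a b := add_dotProduct a b v
  map_smul' r a := smul_dotProduct r a v

lemma dualCode_eq_ker (G : Matrix (Fin k) (Fin n) F) (CC : Submodule F (Fin n → F))
    (h : Submodule.span F (Set.range (fun i => G i)) = CC) :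
    dualCode CC = LinearMap.ker G.mulVecLin := by
  ext v
  have hiff : v ∈ dualCode CC ↔ CC ≤ LinearMap.ker (dotL v) := by
    constructor
    · intro hv c hc; exact hv c hc
    · intro hle c hc; exact hle hc
  rw [hiff, ← h, Submodule.span_le]
  constructor
  · intro hle
    have h2 : ∀ j, G j ⬝ᵥ v = 0 := fun j => hle ⟨j, rfl⟩
    simp only [LinearMap.mem_ker]
    funext j; exact h2 j
  · intro hv x hx
    obtain ⟨j, rfl⟩ := hx
    exact congr_fun (LinearMap.mem_ker.mp hv) j

lemma finrank_ker_eq (G : Matrix (Fin k) (Fin n) F)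
    (hG : LinearIndependent F (fun i => G i)) :
    Module.finrank F (LinearMap.ker G.mulVecLin) = n - k := by
  have h1 := LinearMap.finrank_range_add_finrank_ker G.mulVecLin
  have h2 : Module.finrank F (LinearMap.range G.mulVecLin) = k := by
    simpa [Matrix.rank] using hG.rank_matrix
  have h3 : Module.finrank F (Fin n → F) = n := by simp
  omega
end aux

/-- For `i = 1,2` let `Cᵢ` be a linear code of length `n` over the finite
field `F` with dimension `kᵢ`, generator matrix `Gᵢ` and parity check matrix `Hᵢ`.  Let `Q`
be the code of length `k₂` generated by the rows of `H₁ * G₂ᵀ` and let `P` be a parity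
check matrix of `Q`.  Then `P * G₂` is a generator matrix of `C₁ ⊓ C₂`. -/
theorem stmt0 {F : Type*} [Field F] [Fintype F] {n k₁ k₂ t : ℕ}
    (C₁ C₂ : Submodule F (Fin n → F))
    (hk₁ : Module.finrank F C₁ = k₁) (hk₂ : Module.finrank F C₂ = k₂)
    (G₁ : Matrix (Fin k₁) (Fin n) F) (G₂ : Matrix (Fin k₂) (Fin n) F)
    (H₁ : Matrix (Fin (n - k₁)) (Fin n) F) (H₂ : Matrix (Fin (n - k₂)) (Fin n) F)
    (hG₁ : IsGenMat F C₁ G₁) (hG₂ : IsGenMat F C₂ G₂)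
    (hH₁ : IsGenMat F (dualCode C₁) H₁) (hH₂ : IsGenMat F (dualCode C₂) H₂)
    (P : Matrix (Fin t) (Fin k₂) F)
    (hP : IsGenMat F
      (dualCode (Submodule.span F (Set.range (fun i => (H₁ * G₂.transpose) i)))) P) :
    IsGenMat F (C₁ ⊓ C₂) (P * G₂) := by

  set g : (Fin k₂ → F) →ₗ[F] (Fin n → F) := G₂.vecMulLinear with hg
  -- injectivity of g
  have hginj : LinearMap.ker g = ⊥ :=
    LinearMap.ker_eq_bot.mpr (Matrix.vecMul_injective_iff.mpr hG₂.1)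
  -- rows of P * G₂
  have hrow : (fun i => (P * G₂) i) = g ∘ (fun i => P i) := by
    funext i; ext j
    simp [Matrix.mul_apply, Matrix.vecMul, dotProduct, g]
  -- C₂ is the range of g
  have hC2 : C₂ = LinearMap.range g := by
    rw [hg, range_vecMulLinear, ← hG₂.2]; rfl
  -- C₁ is the kernel of H₁.mulVecLin
  have hC1le : C₁ ≤ LinearMap.ker H₁.mulVecLin := by
    intro v hv
    simp only [LinearMap.mem_ker]
    funext j
    have hj : H₁ j ∈ dualCode C₁ := hH₁.2 ▸ Submodule.subset_span ⟨j, rfl⟩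
    have := hj v hv
    simpa [Matrix.mulVecLin_apply, Matrix.mulVec, dotProduct, mul_comm] using this
  have hk₁n : k₁ ≤ n := by
    rw [← hk₁]
    simpa using Submodule.finrank_le C₁
  have hC1 : C₁ = LinearMap.ker H₁.mulVecLin := by
    refine Submodule.eq_of_le_of_finrank_le hC1le ?_
    rw [finrank_ker_eq H₁ hH₁.1, hk₁]
    omega
  -- membership in the dual of Q
  have key : ∀ x, x ∈ dualCode (Submodule.span F
      (Set.range (fun i => (H₁ * G₂.transpose) i))) ↔ g x ∈ C₁ := by
    intro x
    rw [dualCode_eq_ker (H₁ * G₂.transpose) _ rfl, hC1]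
    simp only [LinearMap.mem_ker, Matrix.mulVecLin_apply, ← Matrix.mulVec_mulVec,
      Matrix.mulVec_transpose]
    rfl
  constructor
  · rw [hrow]
    exact hP.1.map' g hginj
  · rw [hrow, Set.range_comp, ← Submodule.map_span, hP.2]
    apply le_antisymm
    · rintro v ⟨x, hx, rfl⟩
      exact ⟨(key x).mp hx, hC2 ▸ LinearMap.mem_range_self g x⟩
    · rintro v ⟨h1, h2⟩
      obtain ⟨x, rfl⟩ := hC2 ▸ h2
      exact ⟨x, (key x).mpr h1, rfl⟩
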